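/- Let κ be an integrable hyperkernel on a probability space (S, μ). If there exists a measurable f : S → [0,1] with 0 < μ{x : f(x) > 0} < 1 and {x : S_κ(f)(x) > 0} ⊆ {x : f(x) > 0}, then κ is reducible: there exists a measurable set A ⊆ S with 0 < μ(A) < 1 such that κ_e = 0 (μ×μ)-a.e. on A × (S∖A). -/

import Mathlib

open MeasureTheory ENNReal Filter Topology

/-- The nonlinear operator `S_κ` associated to a hyperkernel `κ = (κ_r)_{r ≥ 2}`;
here `κ m` plays the role of `κ_{m+2}`. -/
noncomputable def Sop {S : Type*} [MeasurableSpace S] (μ : Measure S)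
    (κ : (m : ℕ) → (Fin (m + 2) → S) → ℝ≥0∞) (f : S → ℝ) (x : S) : ℝ≥0∞ :=
  ∑' m : ℕ, ((m : ℝ≥0∞) + 2) *
    ∫⁻ y : Fin (m + 1) → S,
      κ m (Fin.cons x y) * ENNReal.ofReal (1 - ∏ i, (1 - f (y i)))
      ∂(Measure.pi fun _ => μ)

/-- The edge kernel `κ_e` of a hyperkernel. -/
noncomputable def edgeKernel {S : Type*} [MeasurableSpace S] (μ : Measure S)
    (κ : (m : ℕ) → (Fin (m + 2) → S) → ℝ≥0∞) (x y : S) : ℝ≥0∞ :=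
  ∑' m : ℕ, ((m : ℝ≥0∞) + 2) * ((m : ℝ≥0∞) + 1) *
    ∫⁻ z : Fin m → S, κ m (Fin.cons x (Fin.cons y z)) ∂(Measure.pi fun _ => μ)

/-- The linear operator `T_κ`. -/
noncomputable def Tlin {S : Type*} [MeasurableSpace S] (μ : Measure S)
    (κ : (m : ℕ) → (Fin (m + 2) → S) → ℝ≥0∞) (f : S → ℝ) (x : S) : ℝ≥0∞ :=
  ∫⁻ y, edgeKernel μ κ x y * ENNReal.ofReal (f y) ∂μ

/-- All kernels of the family are measurable. -/
def HyperkernelMeasurable {S : Type*} [MeasurableSpace S]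
    (κ : (m : ℕ) → (Fin (m + 2) → S) → ℝ≥0∞) : Prop :=
  ∀ m, Measurable (κ m)

/-- Each kernel is invariant under all permutations of its arguments. -/
def HyperkernelSymm {S : Type*} [MeasurableSpace S]
    (κ : (m : ℕ) → (Fin (m + 2) → S) → ℝ≥0∞) : Prop :=
  ∀ m (σ : Equiv.Perm (Fin (m + 2))) (v : Fin (m + 2) → S), κ m (v ∘ σ) = κ m v

/-- Integrability of the hyperkernel: `∑_{r≥2} r ∫_{S^r} κ_r < ∞`. -/
def HyperkernelIntegrable {S : Type*} [MeasurableSpace S] (μ : Measure S)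
    (κ : (m : ℕ) → (Fin (m + 2) → S) → ℝ≥0∞) : Prop :=
  ∑' m : ℕ, ((m : ℝ≥0∞) + 2) *
    ∫⁻ v : Fin (m + 2) → S, κ m v ∂(Measure.pi fun _ => μ) ≠ ⊤

/-- `expNeg a = e^{-a}` for `a ∈ [0,∞]`, with `e^{-∞} = 0`. -/
noncomputable def expNeg (a : ℝ≥0∞) : ℝ := if a = ⊤ then 0 else Real.exp (-a.toReal)

/-- The operator `Φ_κ(f) = 1 - e^{-S_κ(f)}`. -/
noncomputable def Phi {S : Type*} [MeasurableSpace S] (μ : Measure S)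
    (κ : (m : ℕ) → (Fin (m + 2) → S) → ℝ≥0∞) (f : S → ℝ) (x : S) : ℝ :=
  1 - expNeg (Sop μ κ f x)

/-- Irreducibility of the hyperkernel. -/
def HyperkernelIrreducible {S : Type*} [MeasurableSpace S] (μ : Measure S)
    (κ : (m : ℕ) → (Fin (m + 2) → S) → ℝ≥0∞) : Prop :=
  ∀ A : Set S, MeasurableSet A →
    (∀ᵐ p ∂(μ.prod μ), p ∈ A ×ˢ Aᶜ → edgeKernel μ κ p.1 p.2 = 0) →
    μ A = 0 ∨ μ Aᶜ = 0

/-- The decreasing iterates `ρ_0 = 1`, `ρ_{t+1} = Φ_κ(ρ_t)`. -/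
noncomputable def rhoSeq {S : Type*} [MeasurableSpace S] (μ : Measure S)
    (κ : (m : ℕ) → (Fin (m + 2) → S) → ℝ≥0∞) : ℕ → S → ℝ
  | 0 => fun _ => 1
  | t + 1 => Phi μ κ (rhoSeq μ κ t)

/-- The pointwise limit `ρ_κ` of the decreasing iterates `Φ_κ^t(1)`. -/
noncomputable def rhoFun {S : Type*} [MeasurableSpace S] (μ : Measure S)
    (κ : (m : ℕ) → (Fin (m + 2) → S) → ℝ≥0∞) : S → ℝ :=
  fun x => ⨅ t : ℕ, rhoSeq μ κ t x

/-- The condition `‖T_κ‖ > 1` on the `L²(μ)` operator norm of `T_κ`. -/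
def TopNormGtOne {S : Type*} [MeasurableSpace S] (μ : Measure S)
    (κ : (m : ℕ) → (Fin (m + 2) → S) → ℝ≥0∞) : Prop :=
  ∃ h : S → ℝ, Measurable h ∧ (∀ x, 0 ≤ h x) ∧
    (∫⁻ x, ENNReal.ofReal (h x) ^ 2 ∂μ) ≤ 1 ∧ 1 < ∫⁻ x, (Tlin μ κ h x) ^ 2 ∂μ

section Aux

variable {S : Type*} [MeasurableSpace S]

lemma meas_cons (n : ℕ) :
    Measurable (fun q : S × (Fin n → S) => (Fin.cons q.1 q.2 : Fin (n+1) → S)) := by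
  apply measurable_pi_lambda
  intro i
  refine Fin.cases ?_ ?_ i
  · simpa using measurable_fst
  · intro j; simp only [Fin.cons_succ]; exact (measurable_pi_apply j).comp measurable_snd

lemma lint_cons (μ : Measure S) [IsProbabilityMeasure μ] (n : ℕ)
    (g : (Fin (n+1) → S) → ℝ≥0∞) (hg : Measurable g) :
    ∫⁻ y : Fin (n+1) → S, g y ∂(Measure.pi fun _ => μ)
      = ∫⁻ a, ∫⁻ z : Fin n → S, g (Fin.cons a z) ∂(Measure.pi fun _ => μ) ∂μ := by
  have h := measurePreserving_piFinSuccAbove (fun _ : Fin (n+1) => μ) 0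
  have h2 := h.lintegral_comp (f := fun p : S × (Fin n → S) => g (Fin.cons p.1 p.2))
    (hg.comp (meas_cons n))
  rw [lintegral_prod (fun p : S × (Fin n → S) => g (Fin.cons p.1 p.2))
    (by exact ((hg.comp (meas_cons n)).aemeasurable))] at h2
  rw [← h2]
  congr 1; ext y; congr 1
  ext i
  refine Fin.cases ?_ ?_ i <;> simp [MeasurableEquiv.piFinSuccAbove, Fin.tail]

variable (μ : Measure S) [IsProbabilityMeasure μ]
variable (κ : (m : ℕ) → (Fin (m + 2) → S) → ℝ≥0∞) (hmeas : HyperkernelMeasurable κ)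

lemma meas_cons2 (m : ℕ) (x : S) :
    Measurable (fun q : S × (Fin m → S) =>
      (Fin.cons x (Fin.cons q.1 q.2) : Fin (m+2) → S)) :=
  (meas_cons (m+1)).comp (measurable_const.prodMk (meas_cons m))

include hmeas in
lemma edge_pair_meas :
    Measurable (fun p : S × S => edgeKernel μ κ p.1 p.2) := by
  apply Measurable.ennreal_tsum
  intro m
  apply Measurable.const_mul
  apply Measurable.lintegral_prod_right'
    (f := fun q : (S × S) × (Fin m → S) => κ m (Fin.cons q.1.1 (Fin.cons q.1.2 q.2)))
  exact (hmeas m).comp ((meas_cons (m+1)).comp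
    (measurable_fst.fst.prodMk ((meas_cons m).comp
      (measurable_fst.snd.prodMk measurable_snd))))

include hmeas in
lemma edge_meas (x : S) : Measurable (fun y : S => edgeKernel μ κ x y) :=
  (edge_pair_meas μ κ hmeas).comp (measurable_const.prodMk measurable_id)

include hmeas in
lemma key_lemma (f : S → ℝ) (hf : Measurable f) (hf01 : ∀ x, 0 ≤ f x ∧ f x ≤ 1)
    (x : S) (hx : Sop μ κ f x = 0) :
    ∫⁻ y, edgeKernel μ κ x y * ENNReal.ofReal (f y) ∂μ = 0 := by
  unfold Sop at hx
  have hterm : ∀ m, ∫⁻ y : Fin (m+1) → S,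
      κ m (Fin.cons x y) * ENNReal.ofReal (1 - ∏ i, (1 - f (y i)))
      ∂(Measure.pi fun _ => μ) = 0 := by
    intro m
    have h := ENNReal.tsum_eq_zero.mp hx m
    rcases mul_eq_zero.mp h with h | h
    · exfalso; revert h; simp
    · exact h
  have hJ : ∀ m, ∫⁻ y : Fin (m+1) → S,
      κ m (Fin.cons x y) * ENNReal.ofReal (f (y 0)) ∂(Measure.pi fun _ => μ) = 0 := by
    intro m
    refine le_antisymm ?_ zero_le
    rw [← hterm m]
    refine lintegral_mono fun y => ?_
    refine mul_le_mul_right (ENNReal.ofReal_le_ofReal ?_) _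
    have h0 : ∀ i : Fin (m+1), 0 ≤ 1 - f (y i) := fun i => by linarith [(hf01 (y i)).2]
    have h1 : ∀ i : Fin (m+1), 1 - f (y i) ≤ 1 := fun i => by linarith [(hf01 (y i)).1]
    have hprod : ∏ i, (1 - f (y i)) ≤ 1 - f (y 0) := by
      calc ∏ i, (1 - f (y i))
          = (1 - f (y 0)) * ∏ i ∈ Finset.univ.erase 0, (1 - f (y i)) :=
            (Finset.mul_prod_erase _ _ (Finset.mem_univ 0)).symm
        _ ≤ (1 - f (y 0)) * 1 := by
            apply mul_le_mul_of_nonneg_left _ (h0 0)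
            exact Finset.prod_le_one (fun i _ => h0 i) (fun i _ => h1 i)
        _ = 1 - f (y 0) := mul_one _
    linarith
  have hKmeas : ∀ m, Measurable (fun a : S =>
      ∫⁻ z : Fin m → S, κ m (Fin.cons x (Fin.cons a z)) ∂(Measure.pi fun _ => μ)) := by
    intro m
    exact Measurable.lintegral_prod_right'
      (f := fun q : S × (Fin m → S) => κ m (Fin.cons x (Fin.cons q.1 q.2)))
      ((hmeas m).comp (meas_cons2 m x))
  have hfub : ∀ m, ∫⁻ a, (∫⁻ z : Fin m → S, κ m (Fin.cons x (Fin.cons a z))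
      ∂(Measure.pi fun _ => μ)) * ENNReal.ofReal (f a) ∂μ = 0 := by
    intro m
    have hgm : Measurable (fun y : Fin (m+1) → S =>
        κ m (Fin.cons x y) * ENNReal.ofReal (f (y 0))) := by
      refine Measurable.mul ?_ ?_
      · exact (hmeas m).comp ((meas_cons (m+1)).comp
          (measurable_const.prodMk measurable_id))
      · exact (hf.comp (measurable_pi_apply 0)).ennreal_ofReal
    have heq := lint_cons μ m _ hgm
    rw [hJ m] at heq
    have : ∀ a, ∫⁻ z : Fin m → S, κ m (Fin.cons x (Fin.cons a z)) *
        ENNReal.ofReal (f ((Fin.cons a z : Fin (m+1) → S) 0)) ∂(Measure.pi fun _ => μ)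
        = (∫⁻ z : Fin m → S, κ m (Fin.cons x (Fin.cons a z)) ∂(Measure.pi fun _ => μ)) *
          ENNReal.ofReal (f a) := by
      intro a
      simp only [Fin.cons_zero]
      rw [lintegral_mul_const _ (show Measurable fun z : Fin m → S =>
        κ m (Fin.cons x (Fin.cons a z)) from (hmeas m).comp
        ((meas_cons2 m x).comp (measurable_const.prodMk measurable_id)))]
    simp only [this] at heq
    exact heq.symm
  have expand : ∀ y, edgeKernel μ κ x y * ENNReal.ofReal (f y)
      = ∑' m : ℕ, ((m : ℝ≥0∞) + 2) * ((m : ℝ≥0∞) + 1) *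
          (∫⁻ z : Fin m → S, κ m (Fin.cons x (Fin.cons y z)) ∂(Measure.pi fun _ => μ)) *
          ENNReal.ofReal (f y) := by
    intro y
    rw [edgeKernel, ENNReal.tsum_mul_right]
  calc ∫⁻ y, edgeKernel μ κ x y * ENNReal.ofReal (f y) ∂μ
      = ∫⁻ y, ∑' m : ℕ, ((m : ℝ≥0∞) + 2) * ((m : ℝ≥0∞) + 1) *
          (∫⁻ z : Fin m → S, κ m (Fin.cons x (Fin.cons y z)) ∂(Measure.pi fun _ => μ)) *
          ENNReal.ofReal (f y) ∂μ := by
        simp only [expand]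
    _ = ∑' m : ℕ, ∫⁻ y, ((m : ℝ≥0∞) + 2) * ((m : ℝ≥0∞) + 1) *
          (∫⁻ z : Fin m → S, κ m (Fin.cons x (Fin.cons y z)) ∂(Measure.pi fun _ => μ)) *
          ENNReal.ofReal (f y) ∂μ := by
        refine lintegral_tsum fun m => ?_
        exact (((hKmeas m).const_mul _).mul hf.ennreal_ofReal).aemeasurable
    _ = 0 := by
        rw [ENNReal.tsum_eq_zero]
        intro m
        have : ∀ y, ((m : ℝ≥0∞) + 2) * ((m : ℝ≥0∞) + 1) *
            (∫⁻ z : Fin m → S, κ m (Fin.cons x (Fin.cons y z)) ∂(Measure.pi fun _ => μ)) *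
            ENNReal.ofReal (f y)
            = ((m : ℝ≥0∞) + 2) * ((m : ℝ≥0∞) + 1) *
              ((∫⁻ z : Fin m → S, κ m (Fin.cons x (Fin.cons y z)) ∂(Measure.pi fun _ => μ)) *
                ENNReal.ofReal (f y)) := fun y => by ring
        simp only [this]
        rw [lintegral_const_mul _ (show Measurable fun y : S =>
          (∫⁻ z : Fin m → S, κ m (Fin.cons x (Fin.cons y z)) ∂(Measure.pi fun _ => μ)) *
            ENNReal.ofReal (f y) from (hKmeas m).mul hf.ennreal_ofReal)]
        rw [hfub m, mul_zero]

end Aux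

/-- Lemma 2.3, `l_red2`, of the paper.
If there is a measurable `f : S → [0,1]` with `0 < μ{f > 0} < 1` and
`{S_κ(f) > 0} ⊆ {f > 0}`, then `κ` is reducible. -/
theorem stmt5 {S : Type*} [MeasurableSpace S] (μ : Measure S) [IsProbabilityMeasure μ]
    (κ : (m : ℕ) → (Fin (m + 2) → S) → ℝ≥0∞)
    (hmeas : HyperkernelMeasurable κ) (hsymm : HyperkernelSymm κ)
    (hint : HyperkernelIntegrable μ κ)
    (f : S → ℝ) (hf : Measurable f) (hf01 : ∀ x, 0 ≤ f x ∧ f x ≤ 1)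
    (hpos : 0 < μ {x | 0 < f x}) (hlt : μ {x | 0 < f x} < 1)
    (hsub : {x | 0 < Sop μ κ f x} ⊆ {x | 0 < f x}) :
    ∃ A : Set S, MeasurableSet A ∧ 0 < μ A ∧ μ A < 1 ∧
      ∀ᵐ p ∂(μ.prod μ), p ∈ A ×ˢ Aᶜ → edgeKernel μ κ p.1 p.2 = 0 := by
  set B : Set S := {x | 0 < f x} with hBdef
  have hB : MeasurableSet B := measurableSet_lt measurable_const hf
  refine ⟨Bᶜ, hB.compl, ?_, ?_, ?_⟩
  · rw [prob_compl_eq_one_sub hB]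
    exact tsub_pos_iff_lt.mpr hlt
  · rw [prob_compl_eq_one_sub hB]
    exact ENNReal.sub_lt_self one_ne_top one_ne_zero hpos.ne'
  · set G : S × S → ℝ≥0∞ := fun p =>
      Set.indicator Bᶜ (fun _ => 1) p.1 * (edgeKernel μ κ p.1 p.2 * ENNReal.ofReal (f p.2))
      with hGdef
    have hGmeas : Measurable G := by
      refine Measurable.mul ?_ ?_
      · exact (measurable_one.indicator hB.compl).comp measurable_fst
      · exact (edge_pair_meas μ κ hmeas).mul
          ((hf.comp measurable_snd).ennreal_ofReal)
    have hG0 : ∫⁻ p, G p ∂(μ.prod μ) = 0 := by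
      rw [lintegral_prod _ hGmeas.aemeasurable]
      have hinner : ∀ x, ∫⁻ y, G (x, y) ∂μ = 0 := by
        intro x
        by_cases hx : x ∈ Bᶜ
        · have hSx : Sop μ κ f x = 0 := by
            by_contra h
            exact hx (hsub (pos_iff_ne_zero.mpr h))
          simp only [hGdef, Set.indicator_of_mem hx, one_mul]
          exact key_lemma μ κ hmeas f hf hf01 x hSx
        · simp [hGdef, Set.indicator_of_notMem hx]
      simp only [hinner, lintegral_zero]
    have hae : ∀ᵐ p ∂(μ.prod μ), G p = 0 := (lintegral_eq_zero_iff hGmeas).mp hG0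
    filter_upwards [hae] with p hp hmem
    obtain ⟨h1, h2⟩ := hmem
    have h2' : 0 < f p.2 := by simpa [hBdef] using h2
    rw [hGdef] at hp
    simp only [Set.indicator_of_mem h1, one_mul] at hp
    rcases mul_eq_zero.mp hp with h | h
    · exact h
    · exact absurd h (by simp [ENNReal.ofReal_eq_zero, not_le, h2'])
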